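/- Fix a real number b ≠ 0 and define the b-addition on ℝ by x +_b y := b·fract((x+y)/b), where fract denotes the fractional part (so x +_b y = (x+y) − b·⌊(x+y)/b⌋). Then: (i) +_b is associative; (ii) for every e,x,y ∈ ℝ, e +_b (x+y) = e +_b (x +_b y) and (x+y) +_b e = (x +_b y) +_b e, so (ℝ,+,e,+_b) is an e-semig for every e ∈ ℝ (a group-joined-semigroup); (iii) for every integer k and all x,y ∈ ℝ, (b·k) +_b (x+y) = x +_b y (the e-semig is identical at every element of bℤ); (iv) 0 +_b (x +_b y) = x +_b y for all x,y; (v) 0 is the unique element t ∈ ℝ with t +_b t = t; (vi) x +_b (−x) = 0 for every x ∈ ℝ. Hence (ℝ,+_b) is a class united (unipotent) grouplike. -/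
import Mathlib


/-- The `b`-addition on `ℝ`: `x +_b y := b · fract((x + y) / b)`. -/
noncomputable def bAdd (b x y : ℝ) : ℝ := b * Int.fract ((x + y) / b)

lemma bAdd_eq (b : ℝ) (hb : b ≠ 0) (x y : ℝ) :
    bAdd b x y = (x + y) - b * (⌊(x + y) / b⌋ : ℤ) := by
  unfold bAdd Int.fract
  field_simp

lemma bAdd_left (b : ℝ) (hb : b ≠ 0) (x y z : ℝ) :
    bAdd b (bAdd b x y) z = bAdd b (x + y) z := by
  rw [bAdd_eq b hb x y]
  unfold bAdd
  congr 1
  have : (x + y - b * (⌊(x + y) / b⌋ : ℤ) + z) / b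
      = (x + y + z) / b - (⌊(x + y) / b⌋ : ℤ) := by
    field_simp; ring
  rw [this, Int.fract_sub_intCast]

lemma bAdd_right (b : ℝ) (hb : b ≠ 0) (x y z : ℝ) :
    bAdd b x (bAdd b y z) = bAdd b x (y + z) := by
  rw [bAdd_eq b hb y z]
  unfold bAdd
  congr 1
  have : (x + (y + z - b * (⌊(y + z) / b⌋ : ℤ))) / b
      = (x + (y + z)) / b - (⌊(y + z) / b⌋ : ℤ) := by
    field_simp; ring
  rw [this, Int.fract_sub_intCast]

theorem stmt_14 (b : ℝ) (hb : b ≠ 0) :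
    (∀ x y : ℝ, bAdd b x y = (x + y) - b * (⌊(x + y) / b⌋ : ℤ)) ∧
    (∀ x y z : ℝ, bAdd b (bAdd b x y) z = bAdd b x (bAdd b y z)) ∧
    (∀ e x y : ℝ, bAdd b e (x + y) = bAdd b e (bAdd b x y) ∧
      bAdd b (x + y) e = bAdd b (bAdd b x y) e) ∧
    (∀ k : ℤ, ∀ x y : ℝ, bAdd b (b * (k : ℝ)) (x + y) = bAdd b x y) ∧
    (∀ x y : ℝ, bAdd b 0 (bAdd b x y) = bAdd b x y) ∧
    (∀ t : ℝ, bAdd b t t = t ↔ t = 0) ∧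
    (∀ x : ℝ, bAdd b x (-x) = 0) := by
  refine ⟨bAdd_eq b hb, ?_, ?_, ?_, ?_, ?_, ?_⟩
  · intro x y z
    rw [bAdd_left b hb, bAdd_right b hb]
    unfold bAdd
    ring_nf
  · intro e x y
    constructor
    · rw [bAdd_right b hb]
    · rw [bAdd_left b hb]
  · intro k x y
    unfold bAdd
    congr 1
    have : (b * (k : ℝ) + (x + y)) / b = (x + y) / b + (k : ℤ) := by
      field_simp; ring
    rw [this, Int.fract_add_intCast]
  · intro x y
    rw [bAdd_right b hb]
    unfold bAdd
    rw [zero_add]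
  · intro t
    rw [bAdd_eq b hb]
    constructor
    · intro h
      have ht : t = b * (⌊(t + t) / b⌋ : ℤ) := by linarith
      set k := ⌊(t + t) / b⌋ with hk
      have h2 : (t + t) / b = 2 * (k : ℝ) := by
        rw [ht]; field_simp; ring
      have : (⌊(t + t) / b⌋ : ℝ) = 2 * (k : ℝ) := by
        rw [h2]
        norm_cast
        rw [Int.floor_intCast]
      rw [← hk] at this
      have : (k : ℝ) = 0 := by linarith
      rw [ht, this, mul_zero]
    · intro h
      subst h
      simp
  · intro x
    unfold bAdd
    simp [hb]
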